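/- For any graph G and any vertex k ∈ {1,…,v}, the function C_{G,k}(m) = Σ |μ(n_1)⋯μ(n_e)|, where the sum extends over all edge numberings (n_a) of G with ∏_{1 ≤ r ≤ v, r ≠ k} N_r = m, is multiplicative, and for every prime p, C_{G,k}(p) = h_k, the degree of the vertex k in G. -/

import Mathlib

open scoped BigOperators Classical

noncomputable section

/-- The vertex numbering `N_r` associated to an edge numbering `n` of the graph with
vertex set `Fin v` and edge set `E`: the lcm of `n a` over the edges `a` incident to `r`
(equal to `1` if `r` is isolated). -/
def vertexNum (v : ℕ) (E : Finset (Sym2 (Fin v))) (n : {a : Sym2 (Fin v) // a ∈ E} → ℕ+)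
    (r : Fin v) : ℕ :=
  (E.attach.filter fun a => r ∈ a.1).lcm fun a => (n a : ℕ)

/-- `C_{G,k}(m) = Σ |μ(n_1) ⋯ μ(n_e)|`, the sum extending over all edge numberings `(n_a)`
of the graph with `∏_{1 ≤ r ≤ v, r ≠ k} N_r = m`. -/
def CGk (v : ℕ) (E : Finset (Sym2 (Fin v))) (k : Fin v) (m : ℕ) : ℝ :=
  ∑ᶠ n : {a : Sym2 (Fin v) // a ∈ E} → ℕ+,
    if ∏ r ∈ Finset.univ.erase k, vertexNum v E n r = m then
      |∏ a, (ArithmeticFunction.moebius (n a : ℕ) : ℝ)|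
    else 0

section Aux

lemma lcm_mul_of_coprime {α : Type*} (s : Finset α) (f g : α → ℕ) {m₁ m₂ : ℕ}
    (h : Nat.Coprime m₁ m₂) (hf : ∀ a ∈ s, f a ∣ m₁) (hg : ∀ a ∈ s, g a ∣ m₂) :
    s.lcm (fun a => f a * g a) = s.lcm f * s.lcm g := by
  have hF : s.lcm f ∣ m₁ := Finset.lcm_dvd hf
  have hG : s.lcm g ∣ m₂ := Finset.lcm_dvd hg
  have hco : Nat.Coprime (s.lcm f) (s.lcm g) :=
    Nat.Coprime.coprime_dvd_left hF (Nat.Coprime.coprime_dvd_right hG h)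
  apply Nat.dvd_antisymm
  · exact Finset.lcm_dvd fun a ha => mul_dvd_mul (Finset.dvd_lcm ha) (Finset.dvd_lcm ha)
  · exact hco.mul_dvd_of_dvd_of_dvd
      (Finset.lcm_dvd fun a ha => (dvd_mul_right _ _).trans (Finset.dvd_lcm ha))
      (Finset.lcm_dvd fun a ha => (dvd_mul_left _ _).trans (Finset.dvd_lcm ha))

lemma gcd_mul_gcd_eq {n m₁ m₂ : ℕ} (hm₁ : 0 < m₁) (h : Nat.Coprime m₁ m₂)
    (hn : n ∣ m₁ * m₂) : Nat.gcd n m₁ * Nat.gcd n m₂ = n := by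
  set d₁ := Nat.gcd n m₁ with hd₁def
  set d₂ := Nat.gcd n m₂ with hd₂def
  have hd₁ : d₁ ∣ n := Nat.gcd_dvd_left n m₁
  have hd₂ : d₂ ∣ n := Nat.gcd_dvd_left n m₂
  have hco : Nat.Coprime d₁ d₂ :=
    Nat.Coprime.coprime_dvd_left (Nat.gcd_dvd_right n m₁)
      (Nat.Coprime.coprime_dvd_right (Nat.gcd_dvd_right n m₂) h)
  apply Nat.dvd_antisymm (hco.mul_dvd_of_dvd_of_dvd hd₁ hd₂)
  have key : n ∣ d₁ * m₂ := by
    have h2 : n ∣ Nat.gcd (n * m₂) (m₁ * m₂) := Nat.dvd_gcd (dvd_mul_right n m₂) hn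
    rwa [Nat.gcd_mul_right] at h2
  have hd₁pos : 0 < d₁ := Nat.gcd_pos_of_pos_right n hm₁
  obtain ⟨c, hc⟩ := hd₁
  have hcm₂ : c ∣ m₂ := (mul_dvd_mul_iff_left hd₁pos.ne').mp (hc ▸ key)
  have hcn : c ∣ n := hc ▸ dvd_mul_left c d₁
  calc n = d₁ * c := hc
    _ ∣ d₁ * d₂ := mul_dvd_mul_left d₁ (Nat.dvd_gcd hcn hcm₂)

end Aux

section Graph

variable {v : ℕ} {E : Finset (Sym2 (Fin v))} {k : Fin v}

lemma vertexNum_pos (n : {a : Sym2 (Fin v) // a ∈ E} → ℕ+) (r : Fin v) :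
    0 < vertexNum v E n r := by
  rw [Nat.pos_iff_ne_zero, vertexNum, Ne, Finset.lcm_eq_zero_iff]
  rintro ⟨a, -, ha⟩
  exact (n a).ne_zero ha

lemma exists_mem_ne (hE : ∀ a ∈ E, ¬ a.IsDiag) {a : Sym2 (Fin v)} (ha : a ∈ E) :
    ∃ r, r ∈ a ∧ r ≠ k := by
  induction a using Sym2.ind with
  | _ x y =>
    have hxy : x ≠ y := by
      intro h; exact hE _ ha (by simp [h])
    by_cases hx : x = k
    · subst hx
      exact ⟨y, Sym2.mem_mk_right _ _, fun h => hxy h.symm⟩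
    · exact ⟨x, Sym2.mem_mk_left _ _, hx⟩

lemma dvd_of_cond (hE : ∀ a ∈ E, ¬ a.IsDiag) {m : ℕ} {n : {a : Sym2 (Fin v) // a ∈ E} → ℕ+}
    (hc : ∏ r ∈ Finset.univ.erase k, vertexNum v E n r = m) (a : {a : Sym2 (Fin v) // a ∈ E}) :
    (n a : ℕ) ∣ m := by
  obtain ⟨r, hra, hrk⟩ := exists_mem_ne (k := k) hE a.2
  have h1 : (n a : ℕ) ∣ vertexNum v E n r :=
    Finset.dvd_lcm (Finset.mem_filter.2 ⟨Finset.mem_attach _ _, hra⟩)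
  have h2 : vertexNum v E n r ∣ ∏ r ∈ Finset.univ.erase k, vertexNum v E n r :=
    Finset.dvd_prod_of_mem _ (Finset.mem_erase.2 ⟨hrk, Finset.mem_univ r⟩)
  exact hc ▸ h1.trans h2

lemma sym2_two_mem {a : Sym2 (Fin v)} (hd : ¬ a.IsDiag) :
    ∃ x y : Fin v, x ≠ y ∧ x ∈ a ∧ y ∈ a := by
  induction a using Sym2.ind with
  | _ x y =>
    exact ⟨x, y, fun h => hd (by simp [h]), Sym2.mem_mk_left _ _, Sym2.mem_mk_right _ _⟩

lemma vertexNum_dvd {m : ℕ} {n : {a : Sym2 (Fin v) // a ∈ E} → ℕ+}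
    (h : ∀ a, (n a : ℕ) ∣ m) (r : Fin v) : vertexNum v E n r ∣ m :=
  Finset.lcm_dvd fun a _ => h a

/-- The finite set of edge numberings supporting `CGk v E k m`. -/
def TT (v : ℕ) (E : Finset (Sym2 (Fin v))) (k : Fin v) (m : ℕ+) :
    Finset ({a : Sym2 (Fin v) // a ∈ E} → ℕ+) :=
  (Fintype.piFinset fun _ => Finset.Icc 1 m).filter fun n =>
    ∏ r ∈ Finset.univ.erase k, vertexNum v E n r = (m : ℕ)

lemma mem_TT {m : ℕ+} {n : {a : Sym2 (Fin v) // a ∈ E} → ℕ+} (hE : ∀ a ∈ E, ¬ a.IsDiag)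
    (hc : ∏ r ∈ Finset.univ.erase k, vertexNum v E n r = (m : ℕ)) : n ∈ TT v E k m := by
  refine Finset.mem_filter.2 ⟨Fintype.mem_piFinset.2 fun a => ?_, hc⟩
  rw [Finset.mem_Icc]
  refine ⟨(n a).one_le, ?_⟩
  have := dvd_of_cond hE hc a
  exact_mod_cast Nat.le_of_dvd m.pos this

lemma cond_of_mem_TT {m : ℕ+} {n : {a : Sym2 (Fin v) // a ∈ E} → ℕ+} (hn : n ∈ TT v E k m) :
    ∏ r ∈ Finset.univ.erase k, vertexNum v E n r = (m : ℕ) :=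
  (Finset.mem_filter.1 hn).2

lemma CGk_eq (hE : ∀ a ∈ E, ¬ a.IsDiag) (m : ℕ+) :
    CGk v E k m = ∑ n ∈ TT v E k m,
      |∏ a, (ArithmeticFunction.moebius (n a : ℕ) : ℝ)| := by
  rw [CGk, finsum_eq_finset_sum_of_support_subset _ (s := TT v E k m) ?_]
  · refine Finset.sum_congr rfl fun n hn => if_pos (cond_of_mem_TT hn)
  · intro n hn
    simp only [Function.mem_support, ne_eq] at hn
    by_cases hc : ∏ r ∈ Finset.univ.erase k, vertexNum v E n r = (m : ℕ)
    · exact mem_TT hE hc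
    · exact absurd (if_neg hc) hn

lemma CGk_zero : CGk v E k 0 = 0 := by
  rw [CGk]
  have : ∀ n : {a : Sym2 (Fin v) // a ∈ E} → ℕ+,
      (if ∏ r ∈ Finset.univ.erase k, vertexNum v E n r = 0 then
        |∏ a, (ArithmeticFunction.moebius (n a : ℕ) : ℝ)| else 0) = 0 := by
    intro n
    rw [if_neg]
    have := Finset.prod_pos (s := Finset.univ.erase k)
      (fun r _ => vertexNum_pos (E := E) n r)
    omega
  simp only [this, finsum_zero]

end Graph

/-- For any vertex `k`, the function `C_{G,k}` is multiplicative and,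
for every prime `p`, `C_{G,k}(p) = h_k`, the degree of the vertex `k` in the graph. -/
theorem stmt12 (v : ℕ) (E : Finset (Sym2 (Fin v))) (hE : ∀ a ∈ E, ¬ a.IsDiag) (k : Fin v) :
    (∀ m₁ m₂ : ℕ, Nat.Coprime m₁ m₂ →
      CGk v E k (m₁ * m₂) = CGk v E k m₁ * CGk v E k m₂) ∧
    ∀ p : ℕ, p.Prime → CGk v E k p = ((E.filter fun a => k ∈ a).card : ℝ) := by
  constructor
  · intro m₁ m₂ hco
    rcases Nat.eq_zero_or_pos m₁ with h1 | h1
    · subst h1; simp [CGk_zero]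
    rcases Nat.eq_zero_or_pos m₂ with h2 | h2
    · subst h2; simp [CGk_zero]
    have hM : ((⟨m₁, h1⟩ * ⟨m₂, h2⟩ : ℕ+) : ℕ) = m₁ * m₂ := rfl
    have e₀ : CGk v E k (m₁ * m₂) = ∑ n ∈ TT v E k (⟨m₁, h1⟩ * ⟨m₂, h2⟩),
        |∏ a, (ArithmeticFunction.moebius (n a : ℕ) : ℝ)| := CGk_eq hE (⟨m₁, h1⟩ * ⟨m₂, h2⟩)
    have e₁ : CGk v E k m₁ = ∑ n ∈ TT v E k ⟨m₁, h1⟩,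
        |∏ a, (ArithmeticFunction.moebius (n a : ℕ) : ℝ)| := CGk_eq hE ⟨m₁, h1⟩
    have e₂ : CGk v E k m₂ = ∑ n ∈ TT v E k ⟨m₂, h2⟩,
        |∏ a, (ArithmeticFunction.moebius (n a : ℕ) : ℝ)| := CGk_eq hE ⟨m₂, h2⟩
    rw [e₀, e₁, e₂, Finset.sum_mul_sum, ← Finset.sum_product']
    have hsplitP : ∀ (n₁ n₂ : {a : Sym2 (Fin v) // a ∈ E} → ℕ+),
        (∀ a, (n₁ a : ℕ) ∣ m₁) → (∀ a, (n₂ a : ℕ) ∣ m₂) →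
        ∏ r ∈ Finset.univ.erase k, vertexNum v E (fun a => n₁ a * n₂ a) r =
          (∏ r ∈ Finset.univ.erase k, vertexNum v E n₁ r) *
            ∏ r ∈ Finset.univ.erase k, vertexNum v E n₂ r := by
      intro n₁ n₂ hd₁ hd₂
      rw [← Finset.prod_mul_distrib]
      refine Finset.prod_congr rfl fun r _ => ?_
      simp only [vertexNum, PNat.mul_coe]
      exact lcm_mul_of_coprime _ _ _ hco (fun a _ => hd₁ a) (fun a _ => hd₂ a)
    have hPP : ∀ (n₁ n₂ : {a : Sym2 (Fin v) // a ∈ E} → ℕ+),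
        (∀ a, (n₁ a : ℕ) ∣ m₁) → (∀ a, (n₂ a : ℕ) ∣ m₂) →
        (∏ r ∈ Finset.univ.erase k, vertexNum v E n₁ r) *
          (∏ r ∈ Finset.univ.erase k, vertexNum v E n₂ r) = m₁ * m₂ →
        (∏ r ∈ Finset.univ.erase k, vertexNum v E n₁ r) = m₁ ∧
          (∏ r ∈ Finset.univ.erase k, vertexNum v E n₂ r) = m₂ := by
      intro n₁ n₂ hd₁ hd₂ hprod
      have hc₁ : Nat.Coprime (∏ r ∈ Finset.univ.erase k, vertexNum v E n₁ r) m₂ :=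
        Nat.Coprime.prod_left fun r _ =>
          Nat.Coprime.coprime_dvd_left (vertexNum_dvd hd₁ r) hco
      have hc₂ : Nat.Coprime (∏ r ∈ Finset.univ.erase k, vertexNum v E n₂ r) m₁ :=
        Nat.Coprime.prod_left fun r _ =>
          Nat.Coprime.coprime_dvd_left (vertexNum_dvd hd₂ r) hco.symm
      have hP₁ : (∏ r ∈ Finset.univ.erase k, vertexNum v E n₁ r) ∣ m₁ :=
        hc₁.dvd_of_dvd_mul_right (hprod ▸ dvd_mul_right _ _)
      have hm₁ : m₁ ∣ ∏ r ∈ Finset.univ.erase k, vertexNum v E n₁ r := by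
        refine (hc₂.symm).dvd_of_dvd_mul_right ?_
        rw [hprod]; exact dvd_mul_right m₁ m₂
      have e1 : (∏ r ∈ Finset.univ.erase k, vertexNum v E n₁ r) = m₁ :=
        Nat.dvd_antisymm hP₁ hm₁
      refine ⟨e1, ?_⟩
      rw [e1] at hprod
      exact Nat.eq_of_mul_eq_mul_left h1 hprod
    refine Finset.sum_nbij'
      (i := fun n => (fun a => (⟨Nat.gcd (n a) m₁, Nat.gcd_pos_of_pos_left m₁ (n a).pos⟩ : ℕ+),
                      fun a => (⟨Nat.gcd (n a) m₂, Nat.gcd_pos_of_pos_left m₂ (n a).pos⟩ : ℕ+)))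
      (j := fun p a => p.1 a * p.2 a) ?_ ?_ ?_ ?_ ?_
    · intro n hn
      have hcnd := cond_of_mem_TT hn
      rw [hM] at hcnd
      have hdvd : ∀ a, (n a : ℕ) ∣ m₁ * m₂ := dvd_of_cond hE hcnd
      have dd₁ : ∀ a : {a : Sym2 (Fin v) // a ∈ E},
          ((⟨Nat.gcd (n a) m₁, Nat.gcd_pos_of_pos_left m₁ (n a).pos⟩ : ℕ+) : ℕ) ∣ m₁ :=
        fun a => Nat.gcd_dvd_right _ _
      have dd₂ : ∀ a : {a : Sym2 (Fin v) // a ∈ E},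
          ((⟨Nat.gcd (n a) m₂, Nat.gcd_pos_of_pos_left m₂ (n a).pos⟩ : ℕ+) : ℕ) ∣ m₂ :=
        fun a => Nat.gcd_dvd_right _ _
      have hfact : (fun a => (⟨Nat.gcd (n a) m₁, Nat.gcd_pos_of_pos_left m₁ (n a).pos⟩ : ℕ+) *
          (⟨Nat.gcd (n a) m₂, Nat.gcd_pos_of_pos_left m₂ (n a).pos⟩ : ℕ+)) = n := by
        funext a
        exact PNat.coe_injective (gcd_mul_gcd_eq h1 hco (hdvd a))
      have hs := hsplitP _ _ dd₁ dd₂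
      erw [hfact, hcnd] at hs
      obtain ⟨e1, e2⟩ := hPP _ _ dd₁ dd₂ hs.symm
      exact Finset.mem_product.2 ⟨mem_TT hE e1, mem_TT hE e2⟩
    · intro p hp
      obtain ⟨hp1, hp2⟩ := Finset.mem_product.1 hp
      have c₁ := cond_of_mem_TT hp1
      have c₂ := cond_of_mem_TT hp2
      refine mem_TT hE ?_
      rw [hsplitP _ _ (dvd_of_cond hE c₁) (dvd_of_cond hE c₂), c₁, c₂]; rfl
    · intro n hn
      have hcnd := cond_of_mem_TT hn
      rw [hM] at hcnd
      funext a
      exact PNat.coe_injective (gcd_mul_gcd_eq h1 hco (dvd_of_cond hE hcnd a))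
    · intro p hp
      obtain ⟨hp1, hp2⟩ := Finset.mem_product.1 hp
      have dd₁ := dvd_of_cond hE (cond_of_mem_TT hp1)
      have dd₂ := dvd_of_cond hE (cond_of_mem_TT hp2)
      have co12 : ∀ a, Nat.Coprime ((p.2 a : ℕ)) m₁ :=
        fun a => Nat.Coprime.coprime_dvd_left (dd₂ a) hco.symm
      have co21 : ∀ a, Nat.Coprime ((p.1 a : ℕ)) m₂ :=
        fun a => Nat.Coprime.coprime_dvd_left (dd₁ a) hco
      refine Prod.ext ?_ ?_
      · funext a
        refine PNat.coe_injective ?_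
        show Nat.gcd ((p.1 a : ℕ) * (p.2 a : ℕ)) m₁ = (p.1 a : ℕ)
        rw [Nat.Coprime.gcd_mul_right_cancel _ (co12 a)]
        exact Nat.gcd_eq_left (dd₁ a)
      · funext a
        refine PNat.coe_injective ?_
        show Nat.gcd ((p.1 a : ℕ) * (p.2 a : ℕ)) m₂ = (p.2 a : ℕ)
        rw [Nat.Coprime.gcd_mul_left_cancel _ (co21 a)]
        exact Nat.gcd_eq_left (dd₂ a)
    · intro n hn
      have hcnd := cond_of_mem_TT hn
      rw [hM] at hcnd
      have hdvd : ∀ a, (n a : ℕ) ∣ m₁ * m₂ := dvd_of_cond hE hcnd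
      rw [← abs_mul, ← Finset.prod_mul_distrib]
      congr 1
      refine Finset.prod_congr rfl fun a _ => ?_
      have hcoab : Nat.Coprime (Nat.gcd (n a) m₁) (Nat.gcd (n a) m₂) :=
        Nat.Coprime.coprime_dvd_left (Nat.gcd_dvd_right _ _)
          (Nat.Coprime.coprime_dvd_right (Nat.gcd_dvd_right _ _) hco)
      have hmul := ArithmeticFunction.isMultiplicative_moebius.map_mul_of_coprime hcoab
      rw [gcd_mul_gcd_eq h1 hco (hdvd a)] at hmul
      rw [hmul]
      push_cast
      rfl
  · intro p hp
    have e : CGk v E k p = ∑ n ∈ TT v E k ⟨p, hp.pos⟩,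
        |∏ a, (ArithmeticFunction.moebius (n a : ℕ) : ℝ)| := CGk_eq hE ⟨p, hp.pos⟩
    set pn : ℕ+ := ⟨p, hp.pos⟩ with hpn
    set i : {a : Sym2 (Fin v) // a ∈ E.filter fun a => k ∈ a} →
        ({a : Sym2 (Fin v) // a ∈ E} → ℕ+) :=
      fun b a => if a.1 = b.1 then pn else 1 with hi
    -- the image of `i` lands in `TT`
    have hib_mem : ∀ b, i b ∈ TT v E k pn := by
      intro b
      have hbE : b.1 ∈ E := (Finset.mem_filter.1 b.2).1
      have hkb : k ∈ b.1 := (Finset.mem_filter.1 b.2).2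
      obtain ⟨r₀, hr₀⟩ := Sym2.mem_iff_exists.mp hkb
      have hr₀k : r₀ ≠ k := by
        intro h
        exact hE _ hbE (by rw [hr₀, h]; exact Sym2.mk_isDiag_iff.mpr rfl)
      apply mem_TT hE
      show _ = p
      rw [Finset.prod_eq_single r₀ ?side ?notmem]
      case side =>
        intro r hr hne
        refine Nat.dvd_one.1 (Finset.lcm_dvd fun a ha => ?_)
        have hra : r ∈ a.1 := (Finset.mem_filter.1 ha).2
        have hab : a.1 ≠ b.1 := by
          intro hab
          rw [hab, hr₀] at hra
          rcases Sym2.mem_iff.mp hra with h | h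
          · exact (Finset.mem_erase.1 hr).1 h
          · exact hne h
        show ((if a.1 = b.1 then pn else 1 : ℕ+) : ℕ) ∣ 1
        rw [if_neg hab]
        exact Nat.dvd_refl 1
      case notmem =>
        intro h
        exact absurd (Finset.mem_erase.2 ⟨hr₀k, Finset.mem_univ _⟩) h
      -- main value
      apply Nat.dvd_antisymm
      · refine Finset.lcm_dvd fun a ha => ?_
        show ((if a.1 = b.1 then pn else 1 : ℕ+) : ℕ) ∣ p
        split_ifs <;> simp [hpn]
      · have hb' : (⟨b.1, hbE⟩ : {a : Sym2 (Fin v) // a ∈ E}) ∈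
            E.attach.filter fun a => r₀ ∈ a.1 := by
          refine Finset.mem_filter.2 ⟨Finset.mem_attach _ _, ?_⟩
          rw [hr₀]; exact Sym2.mem_mk_right _ _
        have hdl := Finset.dvd_lcm (f := fun a => ((i b) a : ℕ)) hb'
        simpa [hi, hpn, vertexNum] using hdl
    -- every element of `TT` is in the image of `i`
    have hsurj : ∀ n ∈ TT v E k pn, ∃ b, n = i b := by
      intro n hn
      have hcnd : ∏ r ∈ Finset.univ.erase k, vertexNum v E n r = p := cond_of_mem_TT hn
      have hdvd : ∀ a, (n a : ℕ) ∣ p := dvd_of_cond hE hcnd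
      have hval : ∀ a, n a = 1 ∨ (n a : ℕ) = p := by
        intro a
        rcases (Nat.Prime.eq_one_or_self_of_dvd hp _ (hdvd a)) with h | h
        · exact Or.inl (PNat.coe_eq_one_iff.mp h)
        · exact Or.inr h
      have hNdvd : ∀ r, vertexNum v E n r ∣ p := vertexNum_dvd hdvd
      have huniq : ∀ x y : Fin v, x ≠ k → y ≠ k → x ≠ y →
          p ∣ vertexNum v E n x → p ∣ vertexNum v E n y → False := by
        intro x y hx hy hxy dx dy
        have h1 : vertexNum v E n x * vertexNum v E n y ∣
            ∏ r ∈ Finset.univ.erase k, vertexNum v E n r := by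
          rw [← Finset.mul_prod_erase _ _ (Finset.mem_erase.2 ⟨hx, Finset.mem_univ x⟩)]
          refine mul_dvd_mul_left _ (Finset.dvd_prod_of_mem _ ?_)
          exact Finset.mem_erase.2 ⟨hxy.symm, Finset.mem_erase.2 ⟨hy, Finset.mem_univ y⟩⟩
        rw [hcnd] at h1
        have h2 : p * p ∣ p := dvd_trans (mul_dvd_mul dx dy) h1
        have h3 := Nat.le_of_dvd hp.pos h2
        nlinarith [hp.two_le]
      have hpvert : ∀ (a : {a : Sym2 (Fin v) // a ∈ E}) (r : Fin v), r ∈ a.1 →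
          (n a : ℕ) = p → p ∣ vertexNum v E n r := by
        intro a r hra hap
        have hmem : a ∈ E.attach.filter fun a : {a : Sym2 (Fin v) // a ∈ E} => r ∈ a.1 :=
          Finset.mem_filter.2 ⟨Finset.mem_attach _ _, hra⟩
        have := Finset.dvd_lcm (f := fun a : {a : Sym2 (Fin v) // a ∈ E} => ((n a) : ℕ)) hmem
        simpa only [vertexNum, hap] using this
      have hkmem : ∀ a : {a : Sym2 (Fin v) // a ∈ E}, (n a : ℕ) = p → k ∈ a.1 := by
        intro a hap
        by_contra hk
        obtain ⟨x, y, hxy, hxa, hya⟩ := sym2_two_mem (hE _ a.2)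
        exact huniq x y (fun h => hk (h ▸ hxa)) (fun h => hk (h ▸ hya)) hxy
          (hpvert a x hxa hap) (hpvert a y hya hap)
      have hex : ∃ b0 : {a : Sym2 (Fin v) // a ∈ E}, (n b0 : ℕ) = p := by
        by_contra h
        push_neg at h
        have hone : ∀ a, n a = 1 := fun a => (hval a).resolve_right (h a)
        have : ∏ r ∈ Finset.univ.erase k, vertexNum v E n r = 1 := by
          refine Finset.prod_eq_one fun r _ => ?_
          refine Nat.dvd_one.1 (Finset.lcm_dvd fun a _ => ?_)
          rw [hone a]; exact Nat.dvd_refl 1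
        rw [hcnd] at this
        exact hp.ne_one this
      obtain ⟨b0, hb0⟩ := hex
      have hkb0 : k ∈ b0.1 := hkmem b0 hb0
      obtain ⟨r₀, hr₀⟩ := Sym2.mem_iff_exists.mp hkb0
      have hr₀k : r₀ ≠ k := by
        intro h
        exact hE _ b0.2 (by rw [hr₀, h]; exact Sym2.mk_isDiag_iff.mpr rfl)
      have huniq_edge : ∀ a : {a : Sym2 (Fin v) // a ∈ E}, (n a : ℕ) = p → a = b0 := by
        intro a hap
        obtain ⟨c, hc⟩ := Sym2.mem_iff_exists.mp (hkmem a hap)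
        have hck : c ≠ k := by
          intro h
          exact hE _ a.2 (by rw [hc, h]; exact Sym2.mk_isDiag_iff.mpr rfl)
        have hcr : c = r₀ := by
          by_contra hcr
          refine huniq c r₀ hck hr₀k hcr ?_ ?_
          · exact hpvert a c (by rw [hc]; exact Sym2.mem_mk_right _ _) hap
          · exact hpvert b0 r₀ (by rw [hr₀]; exact Sym2.mem_mk_right _ _) hb0
        exact Subtype.ext (by rw [hc, hcr, ← hr₀])
      refine ⟨⟨b0.1, Finset.mem_filter.2 ⟨b0.2, hkb0⟩⟩, ?_⟩
      funext a
      show n a = if a.1 = b0.1 then pn else 1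
      by_cases hab : a.1 = b0.1
      · rw [if_pos hab]
        have : a = b0 := Subtype.ext hab
        subst this
        exact PNat.coe_injective hb0
      · rw [if_neg hab]
        refine (hval a).resolve_right fun hpa => hab ?_
        exact congrArg Subtype.val (huniq_edge a hpa)
    have hinj : ∀ b ∈ (E.filter fun a => k ∈ a).attach,
        ∀ b' ∈ (E.filter fun a => k ∈ a).attach, i b = i b' → b = b' := by
      intro b _ b' _ h
      have hbE : b.1 ∈ E := (Finset.mem_filter.1 b.2).1
      have h2 := congrFun h ⟨b.1, hbE⟩
      simp only [hi] at h2
      by_cases hbb : b.1 = b'.1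
      · exact Subtype.ext hbb
      · exfalso
        rw [if_neg hbb] at h2
        simp only [if_true] at h2
        exact hp.ne_one (congrArg (fun x : ℕ+ => (x : ℕ)) h2)
    have hset : TT v E k pn = Finset.image i (E.filter fun a => k ∈ a).attach := by
      ext n
      constructor
      · intro hn
        obtain ⟨b, hb⟩ := hsurj n hn
        exact Finset.mem_image.2 ⟨b, Finset.mem_attach _ _, hb.symm⟩
      · intro hn
        obtain ⟨b, _, hb⟩ := Finset.mem_image.1 hn
        exact hb ▸ hib_mem b
    have hval1 : ∀ b ∈ (E.filter fun a => k ∈ a).attach,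
        |∏ a, (ArithmeticFunction.moebius ((i b a : ℕ)) : ℝ)| = 1 := by
      intro b _
      have hbE : b.1 ∈ E := (Finset.mem_filter.1 b.2).1
      have hprod : ∏ a, (ArithmeticFunction.moebius ((i b a : ℕ)) : ℝ) =
          (ArithmeticFunction.moebius p : ℝ) := by
        rw [Finset.prod_eq_single (⟨b.1, hbE⟩ : {a : Sym2 (Fin v) // a ∈ E})]
        · simp [hi, hpn]
        · intro a _ hne
          have hab : a.1 ≠ b.1 := fun h => hne (Subtype.ext h)
          simp [hi, hab]
        · intro h
          exact absurd (Finset.mem_univ _) h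
      rw [hprod, ArithmeticFunction.moebius_apply_prime hp]
      simp
    rw [e, hset, Finset.sum_image hinj, Finset.sum_congr rfl hval1]
    simp
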